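/- arXiv:2510.21752 — 4 statements merged into one kernel-verified Lean document; each statement's English description precedes it below -/
import Mathlib

section
/- Let N be a normal bounded operator and A a bounded operator on a Hilbert space H such that whenever AX = XN for bounded X one has A*X = XN* (Fuglede–Putnam property for the pair (A,N)). Then the equation NX - XA = C has a bounded solution X if and only if the block matrices [[N, 0], [0, A]] and [[N, C], [0, A]] are similar operators on H ⊕ H. -/
set_option linter.unusedSectionVars false

open NormedSpace Bornology Set

/-- Fuglede's theorem in a C*-algebra (Rosenblum's proof). -/
theorem fuglede_cstar {𝓐 : Type*} [NormedRing 𝓐] [StarRing 𝓐] [CStarRing 𝓐]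
    [NormedAlgebra ℂ 𝓐] [CompleteSpace 𝓐] [StarModule ℂ 𝓐]
    {n t : 𝓐} (hn : star n * n = n * star n) (h : n * t = t * n) :
    star n * t = t * star n := by
  letI : NormedAlgebra ℚ 𝓐 := .restrictScalars ℚ ℂ 𝓐
  set a := star n with ha
  have hCn : Commute a n := by simpa [Commute, SemiconjBy, ha] using hn
  have hCt : Commute n t := h
  have hcomm : ∀ z : ℂ, exp (z • a) * t = t * exp (z • a) := by
    set f : ℂ → 𝓐 := fun w => exp (w • a) * t * exp (w • (-a)) with hf
    have hdiff : Differentiable ℂ f := by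
      have h1 : Differentiable ℂ (fun w : ℂ => exp (w • a)) :=
        fun w => (hasDerivAt_exp_smul_const a w).differentiableAt
      have h2 : Differentiable ℂ (fun w : ℂ => exp (w • (-a))) :=
        fun w => (hasDerivAt_exp_smul_const (-a) w).differentiableAt
      exact (h1.mul (differentiable_const t)).mul h2
    have hbd : ∀ w : ℂ, ‖f w‖ ≤ ‖t‖ * ‖(1 : 𝓐)‖ := by
      intro w
      set b := (starRingEnd ℂ w) • n with hb
      set s := w • a - b with hs
      have hstar_s : star s = -s := by
        simp [hs, hb, ha, star_smul, sub_eq_add_neg, add_comm]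
      have hCsab : Commute (w • a) b := (hCn.smul_left w).smul_right _
      set u := exp s with hu
      have hu_star : star u = exp (-s) := by rw [hu, star_exp, hstar_s]
      have huu : ‖u‖ * ‖u‖ = ‖(1:𝓐)‖ := by
        have hsuu : star u * u = 1 := by
          rw [hu, hu_star, ← exp_add_of_commute (Commute.refl s).neg_left,
            neg_add_cancel, exp_zero]
        rw [← CStarRing.norm_star_mul_self, hsuu]
      have e1 : u = exp (w • a) * exp (-b) := by
        rw [hu, hs, sub_eq_add_neg, exp_add_of_commute hCsab.neg_right]
      have e2 : star u = exp b * exp (-(w • a)) := by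
        have : -s = b + -(w • a) := by rw [hs]; abel
        rw [hu_star, this, exp_add_of_commute hCsab.symm.neg_right]
      have e3 : exp (-b) * t = t * exp (-b) :=
        (((hCt.smul_left (starRingEnd ℂ w)).neg_left).exp_left).eq
      have e4 : exp (-b) * exp b = 1 := by
        rw [← exp_add_of_commute (Commute.refl b).neg_left, neg_add_cancel, exp_zero]
      have key : exp (-b) * t * exp b = t := by
        rw [e3, mul_assoc, e4, mul_one]
      have key2 : ∀ X : 𝓐, exp (-b) * (t * (exp b * X)) = t * X := fun X => by
        rw [← mul_assoc, ← mul_assoc, key]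
      have hfw : f w = u * t * star u := by
        rw [e2, e1]
        show exp (w • a) * t * exp (w • (-a)) = _
        rw [smul_neg]
        simp only [mul_assoc]
        rw [key2 (exp (-(w • a)))]
      calc ‖f w‖ = ‖u * t * star u‖ := by rw [hfw]
        _ ≤ ‖u * t‖ * ‖star u‖ := norm_mul_le _ _
        _ ≤ ‖u‖ * ‖t‖ * ‖star u‖ := by
            exact mul_le_mul_of_nonneg_right (norm_mul_le _ _) (norm_nonneg _)
        _ = ‖t‖ * (‖u‖ * ‖u‖) := by rw [norm_star]; ring
        _ = ‖t‖ * ‖(1:𝓐)‖ := by rw [huu]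
    have hb : IsBounded (range f) := by
      apply isBounded_iff_forall_norm_le.2 ⟨‖t‖ * ‖(1:𝓐)‖, ?_⟩
      rintro y ⟨w, rfl⟩; exact hbd w
    have hconst : ∀ z : ℂ, f z = f 0 := fun z =>
      hdiff.apply_eq_apply_of_bounded hb z 0
    intro z
    have h0 : f 0 = t := by simp [hf]
    have hz := (hconst z).trans h0
    have e4 : exp (z • (-a)) * exp (z • a) = 1 := by
      rw [← exp_add_of_commute]
      · rw [smul_neg, neg_add_cancel, exp_zero]
      · exact ((Commute.refl a).neg_left.smul_left z).smul_right z
    have := congrArg (· * exp (z • a)) hz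
    simpa only [hf, mul_assoc, e4, mul_one] using this
  -- differentiate at 0
  have d1 : HasDerivAt (fun z : ℂ => exp (z • a) * t) (a * exp ((0:ℂ) • a) * t) 0 :=
    (hasDerivAt_exp_smul_const' a 0).mul_const t
  have d2 : HasDerivAt (fun z : ℂ => exp (z • a) * t)
      (0 * exp ((0:ℂ) • a) + t * (a * exp ((0:ℂ) • a))) 0 := by
    have := (hasDerivAt_const (0:ℂ) t).mul (hasDerivAt_exp_smul_const' a 0)
    simpa [funext hcomm, Pi.mul_def] using this
  have h5 := d1.unique d2
  simp only [zero_smul, exp_zero, mul_one, one_mul, zero_mul, zero_add] at h5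
  exact h5


open ContinuousLinearMap

variable {H : Type*} [NormedAddCommGroup H] [InnerProductSpace ℂ H] [CompleteSpace H]

theorem exists_inverse_of_coercive (D : H →L[ℂ] H) (K : ℝ) (hK : 0 ≤ K)
    (h : ∀ x : H, ‖x‖ ^ 2 ≤ K * (inner ℂ (D x) x : ℂ).re) :
    ∃ Dinv : H →L[ℂ] H, Dinv * D = 1 ∧ D * Dinv = 1 := by
  have hb : ∀ x : H, ‖x‖ ≤ K * ‖D x‖ := by
    intro x
    have h1 : (inner ℂ (D x) x : ℂ).re ≤ ‖D x‖ * ‖x‖ := by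
      calc (inner ℂ (D x) x : ℂ).re ≤ ‖(inner ℂ (D x) x : ℂ)‖ := Complex.re_le_norm _
        _ ≤ ‖D x‖ * ‖x‖ := norm_inner_le_norm _ _
    have h2 := h x
    rcases eq_or_lt_of_le (norm_nonneg x) with h3 | h3
    · rw [← h3]; positivity
    · nlinarith [mul_le_mul_of_nonneg_left h1 hK]
  have hker : LinearMap.ker (D : H →ₗ[ℂ] H) = ⊥ := by
    rw [LinearMap.ker_eq_bot']
    intro x hx
    have := hb x
    rw [ContinuousLinearMap.coe_coe] at hx
    rw [hx, norm_zero, mul_zero] at this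
    exact norm_le_zero_iff.mp this
  have hanti : AntilipschitzWith K.toNNReal D :=
    D.antilipschitz_of_bound (by simpa [Real.coe_toNNReal _ hK] using hb)
  have hclosed : IsClosed (Set.range ⇑D) :=
    hanti.isClosed_range D.uniformContinuous
  have hclosed' : IsClosed ((LinearMap.range (D : H →ₗ[ℂ] H) : Submodule ℂ H) : Set H) := by
    rwa [LinearMap.coe_range]
  have : CompleteSpace (LinearMap.range (D : H →ₗ[ℂ] H) : Submodule ℂ H) := hclosed'.completeSpace_coe
  have horth : (LinearMap.range (D : H →ₗ[ℂ] H))ᗮ = ⊥ := by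
    rw [Submodule.eq_bot_iff]
    intro y hy
    have hy0 : (inner ℂ (D y) y : ℂ) = 0 :=
      (Submodule.mem_orthogonal _ _).mp hy (D y) (LinearMap.mem_range_self _ y)
    have := h y
    rw [hy0] at this
    simp only [Complex.zero_re, mul_zero] at this
    have : ‖y‖ = 0 := by nlinarith [norm_nonneg y]
    exact norm_eq_zero.mp this
  have hsurj : LinearMap.range (D : H →ₗ[ℂ] H) = ⊤ := Submodule.orthogonal_eq_bot_iff.mp horth
  let e := ContinuousLinearEquiv.ofBijective D hker hsurj
  refine ⟨e.symm.toContinuousLinearMap, ?_, ?_⟩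
  · ext x
    simp only [mul_apply_eq_comp, one_apply_eq_self, ContinuousLinearEquiv.coe_coe]
    exact e.symm_apply_apply x
  · ext x
    simp only [mul_apply_eq_comp, one_apply_eq_self, ContinuousLinearEquiv.coe_coe]
    exact e.apply_symm_apply x

/-- The block operator `[[Q, R], [S, T]]` on `H ⊕ H`, `(x, y) ↦ (Qx + Ry, Sx + Ty)`. -/
noncomputable def blockOp (Q R S T : H →L[ℂ] H) : (H × H) →L[ℂ] (H × H) :=
  ((Q.comp (ContinuousLinearMap.fst ℂ H H) + R.comp (ContinuousLinearMap.snd ℂ H H))).prod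
    ((S.comp (ContinuousLinearMap.fst ℂ H H) + T.comp (ContinuousLinearMap.snd ℂ H H)))

lemma blockOp_apply (Q R S T : H →L[ℂ] H) (z : H × H) :
    blockOp Q R S T z = (Q z.1 + R z.2, S z.1 + T z.2) := rfl

set_option maxHeartbeats 1000000 in
theorem stmt2 (N A C : H →L[ℂ] H)
    (hN : adjoint N * N = N * adjoint N)
    (hFP : ∀ X : H →L[ℂ] H, A * X = X * N → adjoint A * X = X * adjoint N) :
    (∃ X : H →L[ℂ] H, N * X - X * A = C) ↔
      ∃ W : ((H × H) →L[ℂ] (H × H))ˣ,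
        (↑W⁻¹ : (H × H) →L[ℂ] (H × H)) * blockOp N 0 0 A * ↑W = blockOp N C 0 A := by
  constructor
  · rintro ⟨X, hX⟩
    have hXp : ∀ y : H, N (X y) - X (A y) = C y := by
      intro y
      have := ContinuousLinearMap.ext_iff.mp hX y
      simpa [mul_apply] using this
    have hmul : ∀ Y Z : H →L[ℂ] H, (blockOp 1 Y 0 1) * (blockOp 1 Z 0 1)
        = blockOp 1 (Y + Z) 0 1 := by
      intro Y Z
      refine ContinuousLinearMap.ext fun z => Prod.ext ?_ ?_ <;>
        (simp [mul_apply, blockOp_apply]; try abel)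
    refine ⟨⟨blockOp 1 X 0 1, blockOp 1 (-X) 0 1, ?_, ?_⟩, ?_⟩
    · rw [hmul]
      simp only [add_neg_cancel]
      refine ContinuousLinearMap.ext fun z => Prod.ext ?_ ?_ <;>
        simp [blockOp_apply, one_apply]
    · rw [hmul]
      simp only [neg_add_cancel]
      refine ContinuousLinearMap.ext fun z => Prod.ext ?_ ?_ <;>
        simp [blockOp_apply, one_apply]
    · show blockOp 1 (-X) 0 1 * blockOp N 0 0 A * blockOp 1 X 0 1 = blockOp N C 0 A
      refine ContinuousLinearMap.ext fun z => Prod.ext ?_ ?_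
      · simp only [mul_apply_eq_comp, blockOp_apply, one_apply_eq_self, zero_apply, neg_apply, map_add,
          add_zero, zero_add, map_neg]
        rw [← hXp z.2]
        abel
      · simp [mul_apply, blockOp_apply]
  · rintro ⟨W, hW⟩
    have hMW : blockOp N 0 0 A * (W : (H × H) →L[ℂ] (H × H))
        = (W : (H × H) →L[ℂ] (H × H)) * blockOp N C 0 A := by
      have h2 := congrArg (fun T => (W : (H × H) →L[ℂ] (H × H)) * T) hW
      rw [← mul_assoc, ← mul_assoc, W.mul_inv, one_mul] at h2
      exact h2
    set Wo : (H × H) →L[ℂ] (H × H) := (W : (H × H) →L[ℂ] (H × H)) with hWo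
    set Vo : (H × H) →L[ℂ] (H × H) := ((W⁻¹ : _ˣ) : (H × H) →L[ℂ] (H × H)) with hVo
    have hVW : Vo * Wo = 1 := W.inv_mul
    have hMWp : ∀ z : H × H, (blockOp N 0 0 A) (Wo z) = Wo ((blockOp N C 0 A) z) := by
      intro z
      rw [← mul_apply_eq_comp, ← mul_apply_eq_comp, hMW]
    set W₁ : H →L[ℂ] H := (fst ℂ H H).comp (Wo.comp (inl ℂ H H)) with hW₁
    set W₂ : H →L[ℂ] H := (fst ℂ H H).comp (Wo.comp (inr ℂ H H)) with hW₂
    set W₃ : H →L[ℂ] H := (snd ℂ H H).comp (Wo.comp (inl ℂ H H)) with hW₃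
    set W₄ : H →L[ℂ] H := (snd ℂ H H).comp (Wo.comp (inr ℂ H H)) with hW₄
    have hWoz : ∀ x : H, Wo (x, 0) = (W₁ x, W₃ x) := fun x => rfl
    have hWoz' : ∀ y : H, Wo (0, y) = (W₂ y, W₄ y) := fun y => rfl
    -- the four intertwining relations
    have key : ∀ x : H, (N (W₁ x), A (W₃ x)) = (W₁ (N x), W₃ (N x)) := by
      intro x
      have h0 := hMWp (x, 0)
      simp only [blockOp_apply, map_zero, add_zero, zero_add, zero_apply] at h0
      rw [hWoz x] at h0
      simpa [hWoz (N x)] using h0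
    have key2 : ∀ y : H, (N (W₂ y), A (W₄ y)) = (W₁ (C y) + W₂ (A y), W₃ (C y) + W₄ (A y)) := by
      intro y
      have h0 := hMWp (0, y)
      simp only [blockOp_apply, map_zero, add_zero, zero_add, zero_apply] at h0
      rw [hWoz' y] at h0
      have hsplit : ((C y : H), (A y : H)) = ((C y, 0) : H × H) + (0, A y) := by simp
      rw [hsplit, map_add, hWoz (C y), hWoz' (A y)] at h0
      simpa using h0
    have r1 : N * W₁ = W₁ * N := by
      ext x; simpa [mul_apply] using congrArg Prod.fst (key x)
    have r3 : A * W₃ = W₃ * N := by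
      ext x; simpa [mul_apply] using congrArg Prod.snd (key x)
    have r2 : N * W₂ = W₁ * C + W₂ * A := by
      ext y; simpa [mul_apply] using congrArg Prod.fst (key2 y)
    have r4 : A * W₄ = W₃ * C + W₄ * A := by
      ext y; simpa [mul_apply] using congrArg Prod.snd (key2 y)
    -- star relations
    have hNn : star N * N = N * star N := by rw [star_eq_adjoint]; exact hN
    have s1half : star N * W₁ = W₁ * star N := fuglede_cstar hNn r1
    have s1 : star W₁ * N = N * star W₁ := by
      have := congrArg star s1half
      simpa [star_mul, star_star] using this
    have fp3 : star A * W₃ = W₃ * star N := by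
      rw [star_eq_adjoint, star_eq_adjoint]; exact hFP W₃ r3
    have s3 : star W₃ * A = N * star W₃ := by
      have := congrArg star fp3
      simpa [star_mul, star_star] using this
    -- the key operators
    set D : H →L[ℂ] H := star W₁ * W₁ + star W₃ * W₃ with hD
    set E : H →L[ℂ] H := star W₁ * W₂ + star W₃ * W₄ with hE
    have hDN : N * D = D * N := by
      have a1 : N * (star W₁ * W₁) = star W₁ * W₁ * N := by
        rw [← mul_assoc, ← s1, mul_assoc, r1, ← mul_assoc]
      have a3 : N * (star W₃ * W₃) = star W₃ * W₃ * N := by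
        rw [← mul_assoc, ← s3, mul_assoc, r3, ← mul_assoc]
      rw [hD, mul_add, add_mul, a1, a3]
    have hNE : N * E = D * C + E * A := by
      have b1 : N * (star W₁ * W₂) = star W₁ * W₁ * C + star W₁ * W₂ * A := by
        rw [← mul_assoc, ← s1, mul_assoc, r2, mul_add, ← mul_assoc, ← mul_assoc]
      have b3 : N * (star W₃ * W₄) = star W₃ * W₃ * C + star W₃ * W₄ * A := by
        rw [← mul_assoc, ← s3, mul_assoc, r4, mul_add, ← mul_assoc, ← mul_assoc]
      rw [hE, mul_add, b1, b3, hD, add_mul, add_mul]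
      abel
    -- coercivity
    have hco : ∀ x : H, ‖x‖ ^ 2 ≤ ‖Vo‖ ^ 2 * (inner ℂ (D x) x : ℂ).re := by
      intro x
      have hinner : (inner ℂ (D x) x : ℂ).re = ‖W₁ x‖ ^ 2 + ‖W₃ x‖ ^ 2 := by
        have : D x = adjoint W₁ (W₁ x) + adjoint W₃ (W₃ x) := by
          simp [hD, mul_apply, add_apply, star_eq_adjoint]
        rw [this, inner_add_left, adjoint_inner_left, adjoint_inner_left,
          inner_self_eq_norm_sq_to_K, inner_self_eq_norm_sq_to_K]
        simp [← Complex.ofReal_pow]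
      rw [hinner]
      have e5 : ‖x‖ ≤ ‖Vo‖ * ‖Wo (x, 0)‖ := by
        have hx0 : (x, (0 : H)) = Vo (Wo (x, 0)) := by
          rw [← mul_apply_eq_comp, hVW, one_apply_eq_self]
        calc ‖x‖ ≤ ‖(x, (0 : H))‖ := by
              rw [Prod.norm_def]; exact le_max_left _ _
          _ = ‖Vo (Wo (x, 0))‖ := by rw [← hx0]
          _ ≤ ‖Vo‖ * ‖Wo (x, 0)‖ := le_opNorm _ _
      have e6 : ‖Wo (x, 0)‖ ^ 2 ≤ ‖W₁ x‖ ^ 2 + ‖W₃ x‖ ^ 2 := by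
        rw [hWoz x, Prod.norm_def]
        rcases max_cases ‖W₁ x‖ ‖W₃ x‖ with ⟨h1, _⟩ | ⟨h1, _⟩ <;> rw [h1] <;>
          nlinarith [norm_nonneg (W₁ x), norm_nonneg (W₃ x)]
      nlinarith [norm_nonneg x, norm_nonneg Vo, norm_nonneg (Wo (x, 0)),
        mul_le_mul_of_nonneg_left e5 (norm_nonneg Vo)]
    obtain ⟨Dinv, hDi1, hDi2⟩ := exists_inverse_of_coercive D (‖Vo‖ ^ 2) (by positivity) hco
    have hNDinv : Dinv * N = N * Dinv := by
      calc Dinv * N = Dinv * N * (D * Dinv) := by rw [hDi2, mul_one]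
        _ = Dinv * (N * D) * Dinv := by simp only [mul_assoc]
        _ = Dinv * (D * N) * Dinv := by rw [hDN]
        _ = (Dinv * D) * (N * Dinv) := by simp only [mul_assoc]
        _ = N * Dinv := by rw [hDi1, one_mul]
    refine ⟨Dinv * E, ?_⟩
    have : N * (Dinv * E) = C + (Dinv * E) * A := by
      calc N * (Dinv * E) = (N * Dinv) * E := by rw [mul_assoc]
        _ = (Dinv * N) * E := by rw [hNDinv]
        _ = Dinv * (N * E) := by rw [mul_assoc]
        _ = Dinv * (D * C + E * A) := by rw [hNE]
        _ = (Dinv * D) * C + (Dinv * E) * A := by rw [mul_add, ← mul_assoc, ← mul_assoc]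
        _ = C + (Dinv * E) * A := by rw [hDi1, one_mul]
    rw [this]
    abel
end

section
/- If the pair (A, B) of invertible bounded Hilbert space operators satisfies the Fuglede–Putnam property, then the pair (A⁻¹, B⁻¹) also satisfies it. -/
open ContinuousLinearMap

variable {H : Type*} [NormedAddCommGroup H] [InnerProductSpace ℂ H] [CompleteSpace H]

theorem stmt7 (A B A' B' : H →L[ℂ] H)
    (hA : A * A' = 1) (hA' : A' * A = 1) (hB : B * B' = 1) (hB' : B' * B = 1)
    (hFP : ∀ X : H →L[ℂ] H, A * X = X * B → adjoint A * X = X * adjoint B) :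
    ∀ X : H →L[ℂ] H, A' * X = X * B' → adjoint A' * X = X * adjoint B' := by
  intro X h
  have e1 : A * X * B' = X := by
    rw [mul_assoc, ← h, ← mul_assoc, hA, one_mul]
  have h1 : A * X = X * B := by
    calc A * X = (A * X * B') * B := by rw [mul_assoc (A * X), hB', mul_one]
    _ = X * B := by rw [e1]
  have h2 := hFP X h1
  have ha : adjoint A' * adjoint A = 1 := by
    rw [show adjoint A' * adjoint A = (adjoint A').comp (adjoint A) from rfl,
      ← adjoint_comp, show A ∘L A' = A * A' from rfl, hA, show adjoint 1 = 1 from adjoint_id]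
  have hb : adjoint B * adjoint B' = 1 := by
    rw [show adjoint B * adjoint B' = (adjoint B).comp (adjoint B') from rfl,
      ← adjoint_comp, show B' ∘L B = B' * B from rfl, hB', show adjoint 1 = 1 from adjoint_id]
  have e2 : adjoint A' * (X * adjoint B) = X := by
    rw [← h2, ← mul_assoc, ha, one_mul]
  calc adjoint A' * X
      = adjoint A' * (X * adjoint B) * adjoint B' := by
        rw [mul_assoc (adjoint A'), mul_assoc X, hb, mul_one]
    _ = X * adjoint B' := by rw [e2]
end

section
/- Let A be an invertible bounded operator and B a bounded operator on a Banach space such that σ(A) ⊆ {z : |z| > ρ} and σ(B) ⊆ {z : |z| < ρ} for some ρ > 0. Then the series X = ∑_{n=0}^∞ A^{-n-1} Y B^n converges in operator norm for every bounded Y, and satisfies AX - XB = Y. -/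
open scoped NNReal ENNReal

variable {E : Type*} [NormedAddCommGroup E] [NormedSpace ℂ E] [CompleteSpace E]

open Filter in
lemma aux_pow_norm_le {a : E →L[ℂ] E} {r : ℝ≥0}
    (h : spectralRadius ℂ a < r) :
    ∀ᶠ n : ℕ in atTop, ‖a ^ n‖ ≤ (r : ℝ) ^ n := by
  have hten := spectrum.pow_nnnorm_pow_one_div_tendsto_nhds_spectralRadius a
  have hev : ∀ᶠ n : ℕ in atTop,
      (‖a ^ n‖₊ : ℝ≥0∞) ^ (1 / (n : ℝ)) < (r : ℝ≥0∞) :=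
    hten.eventually_lt_const h
  filter_upwards [hev, eventually_ge_atTop 1] with n hn hn1
  have hn0 : (n : ℝ) ≠ 0 := by positivity
  have h1 : ((‖a ^ n‖₊ : ℝ≥0∞) ^ (1 / (n : ℝ))) ^ (n : ℝ) ≤ (r : ℝ≥0∞) ^ (n : ℝ) :=
    ENNReal.rpow_le_rpow hn.le (by positivity)
  rw [← ENNReal.rpow_mul, one_div, inv_mul_cancel₀ hn0, ENNReal.rpow_one,
    ENNReal.rpow_natCast] at h1
  have h2 : (‖a ^ n‖₊ : ℝ≥0∞) ≤ ((r ^ n : ℝ≥0) : ℝ≥0∞) := by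
    simpa [ENNReal.coe_pow] using h1
  have h3 : ‖a ^ n‖₊ ≤ r ^ n := by exact_mod_cast h2
  calc ‖a ^ n‖ = (‖a ^ n‖₊ : ℝ) := rfl
    _ ≤ ((r ^ n : ℝ≥0) : ℝ) := by exact_mod_cast h3
    _ = (r : ℝ) ^ n := by push_cast; ring

theorem stmt14 (A B Y : E →L[ℂ] E) (A' : E →L[ℂ] E)
    (hA : A * A' = 1) (hA' : A' * A = 1)
    (ρ : ℝ) (hρ : 0 < ρ)
    (hspecA : ∀ z ∈ spectrum ℂ A, ρ < ‖z‖)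
    (hspecB : ∀ z ∈ spectrum ℂ B, ‖z‖ < ρ) :
    Summable (fun n : ℕ => A' ^ (n + 1) * Y * B ^ n) ∧
    A * (∑' n : ℕ, A' ^ (n + 1) * Y * B ^ n)
      - (∑' n : ℕ, A' ^ (n + 1) * Y * B ^ n) * B = Y := by
  rcases subsingleton_or_nontrivial E with hE | hE
  · have hsub : Subsingleton (E →L[ℂ] E) := inferInstance
    constructor
    · have : (fun n : ℕ => A' ^ (n + 1) * Y * B ^ n) = fun _ => 0 := by
        funext n; exact Subsingleton.elim _ _
      rw [this]; exact summable_zero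
    · exact Subsingleton.elim _ _
  set f : ℕ → E →L[ℂ] E := fun n => A' ^ (n + 1) * Y * B ^ n with hf
  set ρ' : ℝ≥0 := ⟨ρ, hρ.le⟩ with hρ'
  have hρ'0 : 0 < ρ' := by exact_mod_cast hρ
  -- the unit
  let u : (E →L[ℂ] E)ˣ := ⟨A, A', hA, hA'⟩
  -- spectrum of A'
  have hspecA' : ∀ z ∈ spectrum ℂ A', ‖z‖₊ < ρ'⁻¹ := by
    intro z hz
    have hz0 : z ≠ 0 := by
      intro h
      rw [h] at hz
      exact spectrum.zero_notMem ℂ (u⁻¹).isUnit hz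
    have hz' : ((Units.mk0 z hz0 : ℂˣ) : ℂ) ∈ spectrum ℂ ((u⁻¹ : (E →L[ℂ] E)ˣ) : E →L[ℂ] E) := hz
    have := (spectrum.inv_mem_iff (r := Units.mk0 z hz0) (a := u⁻¹)).mp hz'
    rw [inv_inv] at this
    have hρz : ρ < ‖z⁻¹‖ := hspecA _ this
    rw [norm_inv] at hρz
    have hzpos : 0 < ‖z‖ := norm_pos_iff.mpr hz0
    have h2 : ‖z‖ < ρ⁻¹ := (lt_inv_comm₀ hzpos hρ).mpr hρz
    have h3 : ((ρ'⁻¹ : ℝ≥0) : ℝ) = ρ⁻¹ := by rw [NNReal.coe_inv]; rfl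
    rw [← coe_nnnorm, ← h3] at h2
    exact_mod_cast h2
  have hradA' : spectralRadius ℂ A' < (ρ'⁻¹ : ℝ≥0) :=
    spectrum.spectralRadius_lt_of_forall_lt A' hspecA'
  have hradB : spectralRadius ℂ B < ρ' := by
    refine spectrum.spectralRadius_lt_of_forall_lt B fun z hz => ?_
    have := hspecB z hz
    rw [← coe_nnnorm] at this
    exact_mod_cast this
  -- pick s between
  obtain ⟨c, hc1, hc2⟩ := exists_between hradA'
  have hcne : c ≠ ⊤ := (hc2.trans_le le_top).ne
  set s : ℝ≥0 := c.toNNReal with hs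
  have hsc : (s : ℝ≥0∞) = c := ENNReal.coe_toNNReal hcne
  have hradA's : spectralRadius ℂ A' < s := hsc ▸ hc1
  have hslt : s < ρ'⁻¹ := by
    rw [← ENNReal.coe_lt_coe, hsc]; exact hc2
  have hsρ : (s : ℝ) * (ρ' : ℝ) < 1 := by
    have : s * ρ' < ρ'⁻¹ * ρ' := mul_lt_mul_of_pos_right hslt hρ'0
    rw [inv_mul_cancel₀ hρ'0.ne'] at this
    exact_mod_cast this
  -- eventual bounds
  have hB := aux_pow_norm_le hradB
  have hA'' := aux_pow_norm_le hradA's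
  -- summability
  have hsum : Summable f := by
    apply Summable.of_norm_bounded_eventually_nat
      (g := fun n => (‖A'‖ * ‖Y‖) * ((s : ℝ) * (ρ' : ℝ)) ^ n)
    · apply Summable.mul_left
      exact summable_geometric_of_lt_one (by positivity) hsρ
    · filter_upwards [hB, hA''] with n hBn hA'n
      have h1 : ‖A' ^ (n + 1)‖ ≤ ‖A'‖ * ‖A' ^ n‖ := by
        rw [pow_succ']; exact norm_mul_le _ _
      calc ‖f n‖ ≤ ‖A' ^ (n + 1)‖ * ‖Y‖ * ‖B ^ n‖ := by
            refine (norm_mul_le _ _).trans ?_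
            gcongr
            exact norm_mul_le _ _
        _ ≤ ‖A'‖ * ‖A' ^ n‖ * ‖Y‖ * ‖B ^ n‖ := by gcongr
        _ ≤ ‖A'‖ * (s : ℝ) ^ n * ‖Y‖ * ((ρ' : ℝ)) ^ n := by
            gcongr
        _ = (‖A'‖ * ‖Y‖) * ((s : ℝ) * (ρ' : ℝ)) ^ n := by ring
  refine ⟨hsum, ?_⟩
  -- telescoping
  set g : ℕ → E →L[ℂ] E := fun n => A' ^ n * Y * B ^ n with hg
  have hAf : ∀ n, A * f n = g n := by
    intro n
    simp only [hf, hg, pow_succ']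
    calc A * (A' * A' ^ n * Y * B ^ n) = (A * A') * (A' ^ n * Y * B ^ n) := by
          simp only [mul_assoc]
      _ = A' ^ n * Y * B ^ n := by rw [hA, one_mul]
  have hfB : ∀ n, f n * B = g (n + 1) := by
    intro n
    simp only [hf, hg, pow_succ]
    rw [mul_assoc]
  have hgsum : Summable g := by
    have := hsum.mul_left A
    simpa only [hAf] using this
  have h1 : A * (∑' n, f n) = ∑' n, g n := by
    rw [← (hsum.tsum_mul_left A)]
    exact tsum_congr hAf
  have h2 : (∑' n, f n) * B = ∑' n, g (n + 1) := by
    rw [← (hsum.tsum_mul_right B)]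
    exact tsum_congr hfB
  rw [h1, h2, Summable.tsum_eq_zero_add hgsum]
  simp [hg]
end

section
/- If A is a normal bounded operator on a Hilbert space, then for every bounded operator X, ‖I - (AX - XA)‖ ≥ 1 (Williams' inequality: the distance from the identity to the range of the inner derivation of a normal operator is at least 1). -/
open ContinuousLinearMap

variable {H : Type*} [NormedAddCommGroup H] [InnerProductSpace ℂ H] [CompleteSpace H]
  [Nontrivial H]

local notation "⟪" x ", " y "⟫" => @inner ℂ _ _ x y

lemma norm_adjoint_apply_of_normal (N : H →L[ℂ] H)
    (hN : adjoint N * N = N * adjoint N) (x : H) : ‖adjoint N x‖ = ‖N x‖ := by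
  have h1 : ⟪N x, N x⟫ = ⟪x, (adjoint N * N) x⟫ := by
    rw [mul_apply_eq_comp, adjoint_inner_right]
  have h2 : ⟪adjoint N x, adjoint N x⟫ = ⟪x, (N * adjoint N) x⟫ := by
    rw [mul_apply_eq_comp, adjoint_inner_left]
  have h3 : ⟪adjoint N x, adjoint N x⟫ = ⟪N x, N x⟫ := by rw [h1, h2, hN]
  rw [inner_self_eq_norm_sq_to_K, inner_self_eq_norm_sq_to_K] at h3
  have h4 : (‖adjoint N x‖ : ℝ) ^ 2 = ‖N x‖ ^ 2 := by
    exact_mod_cast h3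
  nlinarith [norm_nonneg (adjoint N x), norm_nonneg (N x)]

lemma isUnit_of_normal_bddBelow (N : H →L[ℂ] H)
    (hN : adjoint N * N = N * adjoint N) (c : ℝ) (hc : 0 < c)
    (h : ∀ x, c * ‖x‖ ≤ ‖N x‖) : IsUnit N := by
  have hinj : LinearMap.ker (N : H →ₗ[ℂ] H) = ⊥ := by
    rw [LinearMap.ker_eq_bot']
    intro x hx
    have hx' := h x
    rw [show N x = 0 from hx, norm_zero] at hx'
    have : ‖x‖ ≤ 0 := by nlinarith [norm_nonneg x]
    simpa [norm_le_zero_iff] using this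
  have hanti : AntilipschitzWith (⟨c, hc.le⟩ : NNReal)⁻¹ N := by
    apply N.antilipschitz_of_bound
    intro x
    show ‖x‖ ≤ c⁻¹ * ‖N x‖
    rw [← div_eq_inv_mul, le_div_iff₀ hc, mul_comm]
    exact h x
  have hcl : IsClosed ((LinearMap.range (N : H →ₗ[ℂ] H) : Submodule ℂ H) : Set H) := by
    have : ((LinearMap.range (N : H →ₗ[ℂ] H) : Submodule ℂ H) : Set H) = Set.range N := by
      ext y; simp [LinearMap.mem_range]
    rw [this]
    exact hanti.isClosed_range N.uniformContinuous
  haveI : CompleteSpace (LinearMap.range (N : H →ₗ[ℂ] H) : Submodule ℂ H) := hcl.completeSpace_coe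
  have hr : LinearMap.range (N : H →ₗ[ℂ] H) = ⊤ := by
    rw [← Submodule.orthogonal_eq_bot_iff, Submodule.eq_bot_iff]
    intro y hy
    rw [Submodule.mem_orthogonal] at hy
    have h0 : ⟪adjoint N y, adjoint N y⟫ = 0 := by
      have := hy (N (adjoint N y)) (LinearMap.mem_range.mpr ⟨_, rfl⟩)
      rw [adjoint_inner_left, ← inner_conj_symm, this, map_zero]
    have hNy : adjoint N y = 0 := inner_self_eq_zero.mp h0
    have : ‖N y‖ = 0 := by
      rw [← norm_adjoint_apply_of_normal N hN, hNy, norm_zero]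
    have hy0 : c * ‖y‖ ≤ 0 := by rw [← this]; exact h y
    have : ‖y‖ ≤ 0 := by nlinarith [norm_nonneg y]
    simpa [norm_le_zero_iff] using this
  let e := ContinuousLinearEquiv.ofBijective N hinj hr
  refine ⟨⟨N, (e.symm : H →L[ℂ] H), ?_, ?_⟩, rfl⟩
  · ext x
    show N ((e.symm : H →L[ℂ] H) x) = x
    exact e.apply_symm_apply x
  · ext x
    show (e.symm : H →L[ℂ] H) (N x) = x
    exact e.symm_apply_apply x

theorem stmt17 (A : H →L[ℂ] H) (hA : adjoint A * A = A * adjoint A) :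
    ∀ X : H →L[ℂ] H, 1 ≤ ‖(1 : H →L[ℂ] H) - (A * X - X * A)‖ := by
  intro X
  obtain ⟨lam, hlam⟩ := spectrum.nonempty A
  set μ : H →L[ℂ] H := algebraMap ℂ (H →L[ℂ] H) lam with hμdef
  set N : H →L[ℂ] H := A - μ with hNdef
  have hμadj : adjoint μ = algebraMap ℂ (H →L[ℂ] H) (starRingEnd ℂ lam) := by
    rw [← star_eq_adjoint, hμdef, ← algebraMap_star_comm]
    rfl
  have hNadj : adjoint N = adjoint A - algebraMap ℂ (H →L[ℂ] H) (starRingEnd ℂ lam) := by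
    rw [hNdef, map_sub, hμadj]
  have hNnormal : adjoint N * N = N * adjoint N := by
    rw [hNadj, hNdef, hμdef]
    have h1 : algebraMap ℂ (H →L[ℂ] H) (starRingEnd ℂ lam) * A
        = A * algebraMap ℂ (H →L[ℂ] H) (starRingEnd ℂ lam) := Algebra.commutes _ _
    have h2 : adjoint A * algebraMap ℂ (H →L[ℂ] H) lam
        = algebraMap ℂ (H →L[ℂ] H) lam * adjoint A := (Algebra.commutes _ _).symm
    have h3 : algebraMap ℂ (H →L[ℂ] H) (starRingEnd ℂ lam) * algebraMap ℂ (H →L[ℂ] H) lam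
        = algebraMap ℂ (H →L[ℂ] H) lam * algebraMap ℂ (H →L[ℂ] H) (starRingEnd ℂ lam) := by
      rw [← map_mul, ← map_mul, mul_comm]
    simp only [sub_mul, mul_sub, hA, h1, h2, h3]
    abel
  have happrox : ∀ ε : ℝ, 0 < ε → ∃ x : H, ‖x‖ = 1 ∧ ‖N x‖ < ε := by
    intro ε hε
    by_contra hcon
    push_neg at hcon
    have hb : ∀ x, ε * ‖x‖ ≤ ‖N x‖ := by
      intro x
      rcases eq_or_ne x 0 with rfl | hx
      · simp
      · have hxn : ‖x‖ ≠ 0 := norm_ne_zero_iff.mpr hx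
        have h1 : ‖(‖x‖⁻¹ • x)‖ = 1 := by
          rw [norm_smul, norm_inv, norm_norm, inv_mul_cancel₀ hxn]
        have h2 := hcon _ h1
        rw [N.map_smul_of_tower, norm_smul, norm_inv, norm_norm] at h2
        have hxp : 0 < ‖x‖ := lt_of_le_of_ne (norm_nonneg x) (Ne.symm hxn)
        rw [← div_eq_inv_mul, le_div_iff₀ hxp] at h2
        linarith
    have hu := isUnit_of_normal_bddBelow N hNnormal ε hε hb
    have hu2 : IsUnit (μ - A) := by
      have := hu.neg
      rwa [hNdef, neg_sub] at this
    exact (spectrum.mem_iff.mp hlam) hu2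
  set T : H →L[ℂ] H := (1 : H →L[ℂ] H) - (A * X - X * A) with hTdef
  refine le_of_forall_pos_le_add ?_
  intro δ hδ
  set ε : ℝ := δ / (2 * (‖X‖ + 1)) with hεdef
  have hXpos : (0:ℝ) < 2 * (‖X‖ + 1) := by positivity
  have hε : 0 < ε := div_pos hδ hXpos
  obtain ⟨x, hx1, hxε⟩ := happrox ε hε
  have hadjε : ‖adjoint N x‖ < ε := by
    rwa [norm_adjoint_apply_of_normal N hNnormal]
  -- key identity
  have hAeq : A = N + μ := by rw [hNdef, sub_add_cancel]
  have hμx : ∀ y : H, μ y = lam • y := by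
    intro y
    rw [hμdef, Algebra.algebraMap_eq_smul_one]
    simp
  have hxx : ⟪x, x⟫ = 1 := by
    rw [inner_self_eq_norm_sq_to_K, hx1]
    norm_num
  have hkey : ⟪x, T x⟫ = 1 - ⟪adjoint N x, X x⟫ + ⟪x, X (N x)⟫ := by
    have e1 : ⟪x, (A * X) x⟫ = ⟪adjoint N x, X x⟫ + lam * ⟪x, X x⟫ := by
      rw [mul_apply_eq_comp, ← adjoint_inner_left, hAeq, map_add, hμadj]
      rw [add_apply, inner_add_left]
      congr 1
      have : (algebraMap ℂ (H →L[ℂ] H) (starRingEnd ℂ lam)) x = (starRingEnd ℂ lam) • x := by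
        rw [Algebra.algebraMap_eq_smul_one]; simp
      rw [this, inner_smul_left]
      simp
    have e2 : ⟪x, (X * A) x⟫ = ⟪x, X (N x)⟫ + lam * ⟪x, X x⟫ := by
      rw [mul_apply_eq_comp, hAeq, add_apply, hμx, map_add, inner_add_right]
      congr 1
      rw [map_smul, inner_smul_right]
    rw [hTdef, sub_apply, sub_apply, one_apply_eq_self, inner_sub_right, inner_sub_right, hxx, e1, e2]
    ring
  have h1 : ‖⟪x, T x⟫‖ ≤ ‖T‖ := by
    calc ‖⟪x, T x⟫‖ ≤ ‖x‖ * ‖T x‖ := norm_inner_le_norm _ _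
      _ ≤ ‖x‖ * (‖T‖ * ‖x‖) := by
          exact mul_le_mul_of_nonneg_left (T.le_opNorm x) (norm_nonneg x)
      _ = ‖T‖ := by rw [hx1]; ring
  have h2 : ‖⟪adjoint N x, X x⟫‖ ≤ ε * ‖X‖ := by
    calc ‖⟪adjoint N x, X x⟫‖ ≤ ‖adjoint N x‖ * ‖X x‖ := norm_inner_le_norm _ _
      _ ≤ ε * (‖X‖ * ‖x‖) := by
          exact mul_le_mul hadjε.le (X.le_opNorm x) (norm_nonneg _) hε.le
      _ = ε * ‖X‖ := by rw [hx1]; ring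
  have h3 : ‖⟪x, X (N x)⟫‖ ≤ ‖X‖ * ε := by
    calc ‖⟪x, X (N x)⟫‖ ≤ ‖x‖ * ‖X (N x)‖ := norm_inner_le_norm _ _
      _ = ‖X (N x)‖ := by rw [hx1, one_mul]
      _ ≤ ‖X‖ * ‖N x‖ := X.le_opNorm _
      _ ≤ ‖X‖ * ε := mul_le_mul_of_nonneg_left hxε.le (norm_nonneg X)
  have hone : (1 : ℝ) = ‖⟪x, T x⟫ + ⟪adjoint N x, X x⟫ - ⟪x, X (N x)⟫‖ := by
    have hsum : ⟪x, T x⟫ + ⟪adjoint N x, X x⟫ - ⟪x, X (N x)⟫ = 1 := by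
      rw [hkey]; ring
    rw [hsum, norm_one]
  have htri : ‖⟪x, T x⟫ + ⟪adjoint N x, X x⟫ - ⟪x, X (N x)⟫‖
      ≤ ‖⟪x, T x⟫‖ + ‖⟪adjoint N x, X x⟫‖ + ‖⟪x, X (N x)⟫‖ := by
    calc ‖⟪x, T x⟫ + ⟪adjoint N x, X x⟫ - ⟪x, X (N x)⟫‖
        ≤ ‖⟪x, T x⟫ + ⟪adjoint N x, X x⟫‖ + ‖⟪x, X (N x)⟫‖ := norm_sub_le _ _
      _ ≤ ‖⟪x, T x⟫‖ + ‖⟪adjoint N x, X x⟫‖ + ‖⟪x, X (N x)⟫‖ := by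
          gcongr; exact norm_add_le _ _
  have hXε : ε * ‖X‖ + ‖X‖ * ε ≤ δ := by
    have : ε * (2 * (‖X‖ + 1)) = δ := by
      rw [hεdef]; field_simp
    nlinarith [hε.le, norm_nonneg X]
  linarith [hone ▸ htri]
end
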